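/- If A and B are algebraic structures of a common functional language L, A is equationally Noetherian with respect to L(A)-equations, and B is equationally Noetherian with respect to L(B)-equations, then the direct product C = A × B is equationally Noetherian with respect to L(C)-equations. -/
import Mathlib


/-- Terms of a functional language with function symbols `F` of arities `ar`,
constants from `A`, and variables among `x_1, ..., x_n`. -/
inductive FTerm (F : Type) (ar : F → ℕ) (A : Type) (n : ℕ) where
  | var : Fin n → FTerm F ar A n
  | const : A → FTerm F ar A n
  | func : (f : F) → (Fin (ar f) → FTerm F ar A n) → FTerm F ar A n

/-- Evaluation of a term in an `L`-structure on `A` given by the interpretation `I`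
of the function symbols. -/
def FTerm.eval {F : Type} {ar : F → ℕ} {A : Type} {n : ℕ}
    (I : (f : F) → (Fin (ar f) → A) → A) (v : Fin n → A) : FTerm F ar A n → A
  | .var i => v i
  | .const a => a
  | .func f ts => I f (fun i => (ts i).eval I v)

def SolSet {F : Type} {ar : F → ℕ} {A : Type} {n : ℕ}
    (I : (f : F) → (Fin (ar f) → A) → A)
    (S : Set (FTerm F ar A n × FTerm F ar A n)) : Set (Fin n → A) :=
  {v | ∀ e ∈ S, e.1.eval I v = e.2.eval I v}

/-- An `L`-structure `(A, I)` is equationally Noetherian if every system of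
`L(A)`-equations in finitely many variables is equivalent to a finite subsystem. -/
def EquationallyNoetherian {F : Type} (ar : F → ℕ) (A : Type)
    (I : (f : F) → (Fin (ar f) → A) → A) : Prop :=
  ∀ (n : ℕ) (S : Set (FTerm F ar A n × FTerm F ar A n)),
    ∃ S' ⊆ S, S'.Finite ∧ SolSet I S' = SolSet I S

/-- The product structure on `A × B`, with function symbols interpreted
componentwise. -/
def prodInterp {F : Type} {ar : F → ℕ} {A B : Type}
    (IA : (f : F) → (Fin (ar f) → A) → A) (IB : (f : F) → (Fin (ar f) → B) → B) :
    (f : F) → (Fin (ar f) → A × B) → A × B :=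
  fun f v => (IA f (fun i => (v i).1), IB f (fun i => (v i).2))

/-- Project the constants of a term over `A × B` to `A`. -/
def FTerm.proj1 {F : Type} {ar : F → ℕ} {A B : Type} {n : ℕ} :
    FTerm F ar (A × B) n → FTerm F ar A n
  | .var i => .var i
  | .const c => .const c.1
  | .func f ts => .func f (fun i => (ts i).proj1)

/-- Project the constants of a term over `A × B` to `B`. -/
def FTerm.proj2 {F : Type} {ar : F → ℕ} {A B : Type} {n : ℕ} :
    FTerm F ar (A × B) n → FTerm F ar B n
  | .var i => .var i
  | .const c => .const c.2
  | .func f ts => .func f (fun i => (ts i).proj2)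

theorem FTerm.eval_proj1 {F : Type} {ar : F → ℕ} {A B : Type} {n : ℕ}
    (IA : (f : F) → (Fin (ar f) → A) → A) (IB : (f : F) → (Fin (ar f) → B) → B)
    (v : Fin n → A × B) (t : FTerm F ar (A × B) n) :
    t.proj1.eval IA (fun i => (v i).1) = (t.eval (prodInterp IA IB) v).1 := by
  induction t with
  | var i => rfl
  | const c => rfl
  | func f ts ih =>
      simp only [FTerm.proj1, FTerm.eval, prodInterp]
      congr 1
      funext i
      exact ih i

theorem FTerm.eval_proj2 {F : Type} {ar : F → ℕ} {A B : Type} {n : ℕ}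
    (IA : (f : F) → (Fin (ar f) → A) → A) (IB : (f : F) → (Fin (ar f) → B) → B)
    (v : Fin n → A × B) (t : FTerm F ar (A × B) n) :
    t.proj2.eval IB (fun i => (v i).2) = (t.eval (prodInterp IA IB) v).2 := by
  induction t with
  | var i => rfl
  | const c => rfl
  | func f ts ih =>
      simp only [FTerm.proj2, FTerm.eval, prodInterp]
      congr 1
      funext i
      exact ih i

/-- If `A` is equationally Noetherian w.r.t. `L(A)`-equations and `B` is equationally
Noetherian w.r.t. `L(B)`-equations, then the direct product `C = A × B` is
equationally Noetherian w.r.t. `L(C)`-equations. -/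
theorem prod_equationally_noetherian {F : Type} {ar : F → ℕ} {A B : Type}
    (IA : (f : F) → (Fin (ar f) → A) → A) (IB : (f : F) → (Fin (ar f) → B) → B)
    (hA : EquationallyNoetherian ar A IA) (hB : EquationallyNoetherian ar B IB) :
    EquationallyNoetherian ar (A × B) (prodInterp IA IB) := by
  intro n S
  set pA : (FTerm F ar (A × B) n × FTerm F ar (A × B) n) →
      (FTerm F ar A n × FTerm F ar A n) := fun e => (e.1.proj1, e.2.proj1) with hpA
  set pB : (FTerm F ar (A × B) n × FTerm F ar (A × B) n) →
      (FTerm F ar B n × FTerm F ar B n) := fun e => (e.1.proj2, e.2.proj2) with hpB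
  obtain ⟨SA, hSAsub, hSAfin, hSAeq⟩ := hA n (pA '' S)
  obtain ⟨SB, hSBsub, hSBfin, hSBeq⟩ := hB n (pB '' S)
  obtain ⟨TA, hTAsub, hTAfin, hTAeq⟩ :=
    Set.exists_subset_image_finite_and.mp ⟨SA, hSAsub, hSAfin, rfl⟩
  obtain ⟨TB, hTBsub, hTBfin, hTBeq⟩ :=
    Set.exists_subset_image_finite_and.mp ⟨SB, hSBsub, hSBfin, rfl⟩
  refine ⟨TA ∪ TB, Set.union_subset hTAsub hTBsub, hTAfin.union hTBfin, ?_⟩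
  apply Set.Subset.antisymm
  · -- every solution of the finite subsystem is a solution of S
    intro v hv e he
    -- v1 solves pA '' S
    have hv1 : (fun i => (v i).1) ∈ SolSet IA (pA '' S) := by
      rw [← hSAeq, hTAeq]
      rintro _ ⟨e', he', rfl⟩
      have := hv e' (Or.inl he')
      simpa [hpA, FTerm.eval_proj1 IA IB] using congrArg Prod.fst this
    have hv2 : (fun i => (v i).2) ∈ SolSet IB (pB '' S) := by
      rw [← hSBeq, hTBeq]
      rintro _ ⟨e', he', rfl⟩
      have := hv e' (Or.inr he')
      simpa [hpB, FTerm.eval_proj2 IA IB] using congrArg Prod.snd this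
    have h1 := hv1 (pA e) ⟨e, he, rfl⟩
    have h2 := hv2 (pB e) ⟨e, he, rfl⟩
    simp only [hpA, FTerm.eval_proj1 IA IB] at h1
    simp only [hpB, FTerm.eval_proj2 IA IB] at h2
    exact Prod.ext h1 h2
  · intro v hv e he
    exact hv e (Set.union_subset hTAsub hTBsub he)
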